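/- There exists a constant C > 0 such that for every integer K ≥ 1 the extended non-uniform discretization z_0 := sin²(π/(4K)), z_i := sin²(πi/(2K)) for i ∈ {1, …, K−1}, z_K := cos²(π/(4K)), with gaps d_i := z_i − z_{i−1}, satisfies for every i ∈ {1, …, K}: d_i² / (z_i·(1 − z_i)) ≤ C/K² and d_i² / (z_{i−1}·(1 − z_{i−1})) ≤ C/K². -/

import Mathlib

open Real

lemma sin_lip (x y : ℝ) : |Real.sin x - Real.sin y| ≤ |x - y| := by
  have h0 : |Real.sin x - Real.sin y|
      = 2 * |Real.sin ((x - y) / 2)| * |Real.cos ((x + y) / 2)| := by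
    rw [Real.sin_sub_sin, abs_mul, abs_mul]; norm_num
  have h1 : |Real.sin ((x - y) / 2)| ≤ |(x - y) / 2| := Real.abs_sin_le_abs
  have h2 : |Real.cos ((x + y) / 2)| ≤ 1 := Real.abs_cos_le_one _
  have h3 : |(x - y) / 2| = |x - y| / 2 := by rw [abs_div]; norm_num
  nlinarith [abs_nonneg (Real.sin ((x - y) / 2)), abs_nonneg (x - y),
    abs_nonneg (Real.cos ((x + y) / 2)), abs_nonneg ((x - y) / 2)]

lemma sin_sq_diff (a b : ℝ) :
    Real.sin b ^ 2 - Real.sin a ^ 2 = Real.sin (a + b) * Real.sin (b - a) := by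
  rw [Real.sin_add, Real.sin_sub]
  nlinarith [Real.sin_sq_add_cos_sq a, Real.sin_sq_add_cos_sq b]

lemma sin_lower (K : ℕ) (hK : 1 ≤ K) (x : ℝ) (h1 : π / (2 * K) ≤ x)
    (h2 : x ≤ π - π / (2 * K)) : 1 / (K : ℝ) ≤ Real.sin x := by
  have hKR : (1 : ℝ) ≤ K := by exact_mod_cast hK
  have hKpos : (0 : ℝ) < K := by linarith
  have hpi := Real.pi_pos
  have hfrac : 0 < π / (2 * K) := by positivity
  have key : ∀ y : ℝ, π / (2 * K) ≤ y → y ≤ π / 2 → 1 / (K : ℝ) ≤ Real.sin y := by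
    intro y hy1 hy2
    have h := Real.mul_le_sin (x := y) (by linarith) hy2
    have h' : 2 / π * (π / (2 * K)) ≤ 2 / π * y := by gcongr
    have he : 2 / π * (π / (2 * K)) = 1 / (K : ℝ) := by field_simp
    linarith
  rcases le_or_gt x (π / 2) with hx | hx
  · exact key x h1 hx
  · rw [← Real.sin_pi_sub]
    exact key (π - x) (by linarith) (by linarith)

set_option maxHeartbeats 1000000 in
lemma key1 (K : ℕ) (hK : 1 ≤ K) (a b c : ℝ) (ha : 0 ≤ a) (hab : a ≤ b) (hb : b ≤ π / 2)
    (hgap : b - a ≤ π / (2 * K)) (hsc : 1 / (K : ℝ) ≤ Real.sin (2 * c))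
    (hc : |a + b - 2 * c| ≤ b - a) :
    (Real.sin b ^ 2 - Real.sin a ^ 2) ^ 2 / (Real.sin c ^ 2 * (1 - Real.sin c ^ 2))
      ≤ 100 / (K : ℝ) ^ 2 := by
  have hKR : (1 : ℝ) ≤ K := by exact_mod_cast hK
  have hKpos : (0 : ℝ) < K := by linarith
  have hpi := Real.pi_pos
  have hpi4 : π < 3.15 := Real.pi_lt_d2
  have hspos : 0 < Real.sin (2 * c) := lt_of_lt_of_le (by positivity) hsc
  set s := Real.sin (2 * c) with hs
  have hden : Real.sin c ^ 2 * (1 - Real.sin c ^ 2) = s ^ 2 / 4 := by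
    have hp : Real.sin c ^ 2 + Real.cos c ^ 2 = 1 := Real.sin_sq_add_cos_sq c
    rw [hs, Real.sin_two_mul]
    linear_combination (-(Real.sin c ^ 2)) * hp
  rw [hden]
  have hd : Real.sin b ^ 2 - Real.sin a ^ 2 = Real.sin (a + b) * Real.sin (b - a) :=
    sin_sq_diff a b
  set d := Real.sin b ^ 2 - Real.sin a ^ 2 with hdd
  set g := b - a with hg
  have hba0 : 0 ≤ g := by simp [hg]; linarith
  have hbapi : g ≤ π := by simp [hg]; linarith
  have habpi : a + b ≤ π := by linarith
  have hsba0 : 0 ≤ Real.sin g := Real.sin_nonneg_of_nonneg_of_le_pi hba0 hbapi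
  have hsab0 : 0 ≤ Real.sin (a + b) := Real.sin_nonneg_of_nonneg_of_le_pi (by linarith) habpi
  have hsba : Real.sin g ≤ g := Real.sin_le hba0
  have hsab : Real.sin (a + b) ≤ s + g := by
    have h := (sin_lip (a + b) (2 * c)).trans hc
    have h2 := le_abs_self (Real.sin (a + b) - s)
    linarith
  have hgap2 : g * K ≤ π / 2 := by
    have h := mul_le_mul_of_nonneg_right hgap hKpos.le
    have he : π / (2 * K) * K = π / 2 := by field_simp
    linarith
  have hKs : 1 ≤ (K : ℝ) * s := by
    have := mul_le_mul_of_nonneg_left hsc hKpos.le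
    have he : (K : ℝ) * (1 / K) = 1 := by field_simp
    linarith
  have hba_s : g ≤ π / 2 * s := by
    nlinarith [mul_le_mul_of_nonneg_right hgap2 hspos.le,
      mul_le_mul_of_nonneg_left hKs hba0]
  have h1 : Real.sin (a + b) ≤ (1 + π / 2) * s := by linarith
  have hd0 : 0 ≤ d := by rw [hd]; positivity
  have h2 : d ≤ (1 + π / 2) * s * g := by
    rw [hd]
    exact mul_le_mul h1 hsba hsba0 (by positivity)
  have hdK : d * K ≤ 5 * s := by
    nlinarith [mul_le_mul_of_nonneg_right h2 hKpos.le,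
      mul_le_mul_of_nonneg_left hgap2 (by positivity : (0:ℝ) ≤ (1 + π / 2) * s), hspos]
  have hdK0 : 0 ≤ d * K := mul_nonneg hd0 hKpos.le
  have hfin : (d * K) ^ 2 ≤ (5 * s) ^ 2 := by
    exact pow_le_pow_left₀ hdK0 hdK 2
  clear_value s d g
  rw [div_le_div_iff₀ (by positivity) (by positivity)]
  nlinarith [hfin]

lemma key2 (K : ℕ) (hK : 1 ≤ K) (a b : ℝ) (ha : 0 ≤ a) (hab : a ≤ b) (hb : b ≤ π / 2)
    (hgap : b - a ≤ π / (2 * K)) (hsa : 1 / (K : ℝ) ≤ Real.sin (2 * a))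
    (hsb : 1 / (K : ℝ) ≤ Real.sin (2 * b)) :
    (Real.sin b ^ 2 - Real.sin a ^ 2) ^ 2 / (Real.sin b ^ 2 * (1 - Real.sin b ^ 2))
        ≤ 100 / (K : ℝ) ^ 2 ∧
    (Real.sin b ^ 2 - Real.sin a ^ 2) ^ 2 / (Real.sin a ^ 2 * (1 - Real.sin a ^ 2))
        ≤ 100 / (K : ℝ) ^ 2 := by
  constructor
  · refine key1 K hK a b b ha hab hb hgap hsb ?_
    rw [show a + b - 2 * b = -(b - a) by ring, abs_neg, abs_of_nonneg (by linarith)]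
  · refine key1 K hK a b a ha hab hb hgap hsa ?_
    rw [show a + b - 2 * a = b - a by ring, abs_of_nonneg (by linarith)]


/-- The extended non-uniform discretization point: `z_0 = sin²(π/(4K))`,
`z_i = sin²(πi/(2K))` for `1 ≤ i ≤ K−1`, and `z_K = cos²(π/(4K))`. -/
noncomputable def zext (K i : ℕ) : ℝ :=
  if i = 0 then Real.sin (π / (4 * K)) ^ 2
  else if i = K then Real.cos (π / (4 * K)) ^ 2
  else Real.sin (π * i / (2 * K)) ^ 2

set_option maxHeartbeats 1000000 in
/-- **Two-sided gap-to-variance bounds for the extended sin² discretization (Lemma 7).**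
There is a universal constant `C > 0` such that for all `K ≥ 1` and `1 ≤ i ≤ K`,
with `d_i = z_i − z_{i−1}`, both `d_i²/(z_i(1 − z_i)) ≤ C/K²` and
`d_i²/(z_{i−1}(1 − z_{i−1})) ≤ C/K²`. -/
theorem extended_sinsq_discretization_gap_bounds :
    ∃ C > 0, ∀ K : ℕ, 1 ≤ K → ∀ i : ℕ, 1 ≤ i → i ≤ K →
      (zext K i - zext K (i - 1)) ^ 2 / (zext K i * (1 - zext K i)) ≤ C / (K : ℝ) ^ 2 ∧
      (zext K i - zext K (i - 1)) ^ 2 / (zext K (i - 1) * (1 - zext K (i - 1)))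
        ≤ C / (K : ℝ) ^ 2 := by
  refine ⟨100, by norm_num, ?_⟩
  intro K hK i hi hiK
  have hpi := Real.pi_pos
  by_cases hK1 : K = 1
  · subst hK1
    have hi1 : i = 1 := by omega
    subst hi1
    have hz1 : zext 1 1 = Real.sin (π / 4) ^ 2 := by
      simp only [zext, if_neg one_ne_zero, if_pos rfl]
      norm_num [Real.cos_pi_div_four, Real.sin_pi_div_four]
    have hz0 : zext 1 0 = Real.sin (π / 4) ^ 2 := by
      simp only [zext, if_pos rfl]
      norm_num
    rw [show (1:ℕ) - 1 = 0 from rfl, hz1, hz0]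
    have hs : 1 / ((1:ℕ) : ℝ) ≤ Real.sin (2 * (π / 4)) := by
      rw [show 2 * (π / 4) = π / 2 by ring, Real.sin_pi_div_two]
      norm_num
    exact key2 1 le_rfl (π / 4) (π / 4) (by positivity) le_rfl (by linarith)
      (by push_cast; norm_num; positivity) hs hs
  · have hK2 : 2 ≤ K := by omega
    have hK0 : K ≠ 0 := by omega
    have hKR : (1 : ℝ) ≤ (K : ℝ) := by exact_mod_cast hK
    have hK2R : (2 : ℝ) ≤ (K : ℝ) := by exact_mod_cast hK2
    have hKpos : (0 : ℝ) < K := by linarith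
    set u := π / (4 * (K : ℝ)) with hu_def
    have hu : 0 < u := by positivity
    have hu' : 0 ≤ u := hu.le
    have hpieq : π = 4 * (K : ℝ) * u := by rw [hu_def]; field_simp
    have hhalf : π / (2 * (K : ℝ)) = 2 * u := by rw [hu_def]; field_simp; ring
    have hpi2 : π / 2 = 2 * (K : ℝ) * u := by
      rw [hu_def]; field_simp; ring
    have hKu : 0 ≤ ((K : ℝ) - 2) * u := mul_nonneg (by linarith) hu'
    by_cases hik : i = K
    · rw [hik]
      have hzb : zext K K = Real.sin ((2 * (K : ℝ) - 1) * u) ^ 2 := by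
        simp only [zext, if_neg hK0, if_pos rfl, ↓reduceIte]
        rw [← Real.sin_pi_div_two_sub]
        congr 2
        rw [hu_def]; field_simp; ring
      have hza : zext K (K - 1) = Real.sin ((2 * (K : ℝ) - 2) * u) ^ 2 := by
        have h1 : ¬(K - 1 = 0) := by omega
        have h2 : ¬(K - 1 = K) := by omega
        simp only [zext, if_neg h1, if_neg h2]
        congr 2
        rw [Nat.cast_sub hK, hu_def]
        push_cast
        field_simp; ring
      rw [hzb, hza]
      refine key2 K hK _ _ (by linarith) (by linarith) (by linarith)
        (by rw [hhalf]; linarith) ?_ ?_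
      · refine sin_lower K hK _ ?_ ?_ <;> rw [hhalf] <;> linarith
      · refine sin_lower K hK _ ?_ ?_ <;> rw [hhalf] <;> linarith
    · have hiK' : i < K := lt_of_le_of_ne hiK hik
      have hiR : (1 : ℝ) ≤ (i : ℝ) := by exact_mod_cast hi
      have hiKR : (i : ℝ) + 1 ≤ (K : ℝ) := by exact_mod_cast hiK'
      have hi0 : i ≠ 0 := by omega
      have hzb : zext K i = Real.sin (2 * (i : ℝ) * u) ^ 2 := by
        simp only [zext, if_neg hi0, if_neg hik]
        congr 2
        rw [hu_def]; field_simp; ring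
      have hKiu : 0 ≤ ((K : ℝ) - (i : ℝ) - 1) * u := mul_nonneg (by linarith) hu'
      by_cases hi1 : i = 1
      · subst hi1
        have hza : zext K 0 = Real.sin (1 * u) ^ 2 := by
          simp only [zext, if_pos rfl]
          rw [hu_def]; norm_num
        rw [show (1:ℕ) - 1 = 0 from rfl, hzb, hza]
        have hiu : (2 : ℝ) * ((1:ℕ) : ℝ) * u = 2 * u := by push_cast; ring
        refine key2 K hK _ _ (by linarith) (by rw [hiu]; linarith) (by rw [hiu]; linarith)
          (by rw [hhalf, hiu]; linarith) ?_ ?_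
        · refine sin_lower K hK _ ?_ ?_ <;> rw [hhalf] <;> push_cast <;> linarith
        · refine sin_lower K hK _ ?_ ?_ <;> rw [hhalf] <;> push_cast <;> linarith
      · have hi2 : 2 ≤ i := by omega
        have hi2R : (2 : ℝ) ≤ (i : ℝ) := by exact_mod_cast hi2
        have hiu : 0 ≤ ((i : ℝ) - 2) * u := mul_nonneg (by linarith) hu'
        have hza : zext K (i - 1) = Real.sin ((2 * (i : ℝ) - 2) * u) ^ 2 := by
          have h1 : ¬(i - 1 = 0) := by omega
          have h2 : ¬(i - 1 = K) := by omega
          simp only [zext, if_neg h1, if_neg h2]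
          congr 2
          rw [Nat.cast_sub hi, hu_def]
          push_cast
          field_simp; ring
        rw [hzb, hza]
        refine key2 K hK _ _ (by nlinarith) (by nlinarith) (by nlinarith)
          (by rw [hhalf]; nlinarith) ?_ ?_
        · refine sin_lower K hK _ ?_ ?_ <;> rw [hhalf] <;> nlinarith
        · refine sin_lower K hK _ ?_ ?_ <;> rw [hhalf] <;> nlinarith
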